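/- Let R be a commutative ring, d ∈ R, and m a natural number. Then the coefficient of X^{2m} in the polynomial ((X² − 1)·(d·X² − 1))^m ∈ R[X] equals (−1)^m · Σ_{j=0}^{m} binom(m, j)² · d^j. -/

import Mathlib

open Finset Polynomial

private lemma aux_coeff_pow {R : Type*} [CommRing R] (a b : R) (m k : ℕ) :
    ((C a * X + C b) ^ m : R[X]).coeff k = a ^ k * b ^ (m - k) * (m.choose k : R) := by
  rw [add_pow, finset_sum_coeff]
  have hterm : ∀ i : ℕ, ((C a * X) ^ i * C b ^ (m - i) * ((m.choose i : ℕ) : R[X]))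
      = C (a ^ i * b ^ (m - i) * (m.choose i : R)) * X ^ i := by
    intro i
    rw [map_mul, map_mul, C_pow, C_pow, C_eq_natCast, mul_pow]
    ring
  simp only [hterm, coeff_C_mul, coeff_X_pow]
  by_cases hk : k ≤ m
  · rw [Finset.sum_eq_single k]
    · simp
    · intro i _ hik
      simp [Ne.symm hik]
    · intro h
      exact absurd (Finset.mem_range.2 (Nat.lt_succ_of_le hk)) h
  · push_neg at hk
    rw [Nat.choose_eq_zero_of_lt hk, Finset.sum_eq_zero]
    · simp
    · intro i hi
      have : k ≠ i := by
        intro h; subst h; exact absurd (Finset.mem_range.1 hi) (by omega)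
      simp [this]

theorem stmt17 (R : Type*) [CommRing R] (d : R) (m : ℕ) :
    (((X ^ 2 - 1) * (C d * X ^ 2 - 1)) ^ m : R[X]).coeff (2 * m) =
      (-1 : R) ^ m * ∑ j ∈ range (m + 1), (m.choose j : R) ^ 2 * d ^ j := by
  have hx : ((X ^ 2 - 1) * (C d * X ^ 2 - 1) : R[X]) ^ m
      = expand R 2 (((X - 1) * (C d * X - 1)) ^ m) := by
    simp [map_pow, map_mul, map_sub, sub_eq_add_neg]
  rw [hx, coeff_expand_mul' (by norm_num)]
  have h1 : ((X - 1 : R[X])) = C 1 * X + C (-1) := by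
    simp [sub_eq_add_neg]
  have h2 : ((C d * X - 1 : R[X])) = C d * X + C (-1) := by
    simp [sub_eq_add_neg]
  rw [mul_pow, coeff_mul, Finset.Nat.sum_antidiagonal_eq_sum_range_succ_mk]
  rw [Finset.mul_sum, ← Finset.sum_range_reflect]
  refine Finset.sum_congr rfl fun k hk => ?_
  have hkm : k ≤ m := Nat.lt_succ_iff.1 (Finset.mem_range.1 hk)
  rw [h1, h2, aux_coeff_pow, aux_coeff_pow]
  simp only [Nat.succ_sub_one]
  have e1 : m - (m - k) = k := by omega
  rw [e1, Nat.choose_symm hkm]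
  have hsgn : ((-1 : R)) ^ (m - k) * (-1 : R) ^ k = (-1) ^ m := by
    rw [← pow_add]; congr 1; omega
  rw [← hsgn]; ring
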